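/- Let T be a finitely generated ℤ_ℓ-module with a ℤ_ℓ-linear action of a group G, and set V = T ⊗_{ℤ_ℓ} ℚ_ℓ. If the G-invariants of T/ℓⁿT are of order bounded by a constant c independent of n, then V^G = 0. -/

import Mathlib

open Pointwise

section helpers

variable {R M : Type*} [CommRing R] [AddCommGroup M] [Module R M]

lemma mem_pointwise_smul_top_iff (a : R) (x : M) :
    x ∈ a • (⊤ : Submodule R M) ↔ ∃ y, a • y = x := by
  constructor
  · rintro ⟨y, -, rfl⟩; exact ⟨y, rfl⟩
  · rintro ⟨y, rfl⟩; exact Submodule.smul_mem_pointwise_smul y a ⊤ trivial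

lemma pointwise_smul_top_antitone (a : R) {m n : ℕ} (h : m ≤ n) :
    a ^ n • (⊤ : Submodule R M) ≤ a ^ m • (⊤ : Submodule R M) := by
  intro x hx
  obtain ⟨y, hy⟩ := (mem_pointwise_smul_top_iff _ x).mp hx
  refine (mem_pointwise_smul_top_iff _ _).mpr ⟨a ^ (n - m) • y, ?_⟩
  rw [smul_smul, ← pow_add, Nat.add_sub_cancel' h, hy]

end helpers

lemma padic_quot_finite (ℓ : ℕ) [Fact ℓ.Prime]
    (T : Type*) [AddCommGroup T] [Module ℤ_[ℓ] T] [Module.Finite ℤ_[ℓ] T] (n : ℕ) :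
    Finite (T ⧸ ((ℓ : ℤ_[ℓ]) ^ n • (⊤ : Submodule ℤ_[ℓ] T))) := by
  set r : ℤ_[ℓ] := (ℓ : ℤ_[ℓ]) ^ n with hr
  set I : Ideal ℤ_[ℓ] := Ideal.span {r} with hI
  haveI : NeZero (ℓ ^ n) := ⟨pow_ne_zero n (Fact.out : ℓ.Prime).ne_zero⟩
  haveI : Finite (ℤ_[ℓ] ⧸ I) := by
    have hk : I = RingHom.ker (PadicInt.toZModPow (p := ℓ) n) := by
      rw [PadicInt.ker_toZModPow]
    rw [hk]
    exact Finite.of_injective _ (RingHom.kerLift_injective (PadicInt.toZModPow n))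
  haveI : IsScalarTower ℤ_[ℓ] (ℤ_[ℓ] ⧸ I) (T ⧸ r • (⊤ : Submodule ℤ_[ℓ] T)) := by
    constructor
    intro a b x
    obtain ⟨c, rfl⟩ := Ideal.Quotient.mk_surjective b
    obtain ⟨m, rfl⟩ := Submodule.Quotient.mk_surjective _ x
    have h1 : a • (Ideal.Quotient.mk I c) = Ideal.Quotient.mk I (a * c) := by
      rw [Algebra.smul_def, Ideal.Quotient.algebraMap_eq, ← map_mul]
    rw [h1]
    show Submodule.Quotient.mk ((a * c) • m) = a • Submodule.Quotient.mk (c • m)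
    rw [← Submodule.Quotient.mk_smul, mul_smul]
  haveI : Module.Finite (ℤ_[ℓ] ⧸ I) (T ⧸ r • (⊤ : Submodule ℤ_[ℓ] T)) :=
    Module.Finite.of_restrictScalars_finite ℤ_[ℓ] _ _
  exact Module.finite_of_finite (ℤ_[ℓ] ⧸ I)

lemma key_torsion (ℓ : ℕ) [Fact ℓ.Prime]
    (T : Type*) [AddCommGroup T] [Module ℤ_[ℓ] T] [Module.Finite ℤ_[ℓ] T]
    (G : Type*) [Group G] (ρ : Representation ℤ_[ℓ] G T)
    (c : ℕ)
    (hbound : ∀ n : ℕ,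
      Nat.card {x : T ⧸ ((ℓ : ℤ_[ℓ]) ^ n • (⊤ : Submodule ℤ_[ℓ] T)) |
        ∀ g : G, ∀ t : T, Submodule.Quotient.mk t = x →
          Submodule.Quotient.mk (ρ g t) = x} ≤ c)
    (t : T) (ht : ∀ g, ρ g t = t) :
    ∃ m : ℕ, (ℓ : ℤ_[ℓ]) ^ m • t = 0 := by
  by_contra hcon
  push_neg at hcon
  have hℓnu : ¬ IsUnit ((ℓ : ℤ_[ℓ])) := by
    rw [PadicInt.isUnit_iff, PadicInt.norm_p]
    have h2 : (2:ℝ) ≤ (ℓ:ℝ) := by exact_mod_cast (Fact.out : ℓ.Prime).two_le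
    intro h
    rw [inv_eq_one] at h
    linarith
  haveI : Small.{0} T := by
    obtain ⟨k, f, hf⟩ := Module.Finite.exists_fin' ℤ_[ℓ] T
    exact small_of_surjective hf
  let e : Shrink.{0} T ≃ₗ[ℤ_[ℓ]] T := Shrink.linearEquiv ℤ_[ℓ] T
  haveI : Module.Finite ℤ_[ℓ] (Shrink.{0} T) := Module.Finite.equiv e.symm
  have hKrull := Ideal.iInf_pow_smul_eq_bot_of_isLocalRing (M := Shrink.{0} T)
      (I := Ideal.span {(ℓ:ℤ_[ℓ])})
      (fun h => hℓnu ((Ideal.span_singleton_eq_top).mp h))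
  have hnot : ∀ i : ℕ, ∃ n, (ℓ : ℤ_[ℓ]) ^ i • t ∉ (ℓ : ℤ_[ℓ]) ^ n • (⊤ : Submodule ℤ_[ℓ] T) := by
    intro i
    by_contra hh
    push_neg at hh
    apply hcon i
    rw [eq_bot_iff] at hKrull
    have hmem : e.symm ((ℓ : ℤ_[ℓ]) ^ i • t) ∈ (⊥ : Submodule ℤ_[ℓ] (Shrink.{0} T)) := by
      apply hKrull
      rw [Submodule.mem_iInf]
      intro n
      rw [Ideal.span_singleton_pow, Submodule.ideal_span_singleton_smul]
      obtain ⟨y, hy⟩ := (mem_pointwise_smul_top_iff _ _).mp (hh n)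
      refine (mem_pointwise_smul_top_iff _ _).mpr ⟨e.symm y, ?_⟩
      rw [← map_smul, hy]
    rw [Submodule.mem_bot] at hmem
    apply e.symm.injective
    rw [hmem, map_zero]
  choose nf hnf using hnot
  obtain ⟨n, hn⟩ : ∃ n : ℕ, ∀ i : ℕ, i ≤ c → nf i ≤ n :=
    ⟨(Finset.range (c + 1)).sup nf, fun i hi =>
      Finset.le_sup (Finset.mem_range.mpr (Nat.lt_succ_of_le hi))⟩
  have hout : ∀ i : ℕ, i ≤ c →
      (ℓ : ℤ_[ℓ]) ^ i • t ∉ (ℓ : ℤ_[ℓ]) ^ n • (⊤ : Submodule ℤ_[ℓ] T) := by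
    intro i hi hmem
    exact hnf i (pointwise_smul_top_antitone _ (hn i hi) hmem)
  have hmemS : ∀ i : Fin (c+1),
      (Submodule.Quotient.mk ((ℓ : ℤ_[ℓ]) ^ (i:ℕ) • t) :
        T ⧸ ((ℓ : ℤ_[ℓ]) ^ n • (⊤ : Submodule ℤ_[ℓ] T))) ∈
      {x : T ⧸ ((ℓ : ℤ_[ℓ]) ^ n • (⊤ : Submodule ℤ_[ℓ] T)) |
        ∀ g : G, ∀ t : T, Submodule.Quotient.mk t = x →
          Submodule.Quotient.mk (ρ g t) = x} := by
    intro i g t₀ h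
    rw [Submodule.Quotient.eq] at h ⊢
    have heq : ρ g t₀ - (ℓ : ℤ_[ℓ]) ^ (i:ℕ) • t = ρ g (t₀ - (ℓ : ℤ_[ℓ]) ^ (i:ℕ) • t) := by
      rw [map_sub, map_smul, ht g]
    rw [heq]
    obtain ⟨y, hy⟩ := (mem_pointwise_smul_top_iff _ _).mp h
    refine (mem_pointwise_smul_top_iff _ _).mpr ⟨ρ g y, ?_⟩
    rw [← map_smul, hy]
  have hdist : ∀ i j : ℕ, i ≤ c → i < j →
      (ℓ : ℤ_[ℓ]) ^ i • t - (ℓ : ℤ_[ℓ]) ^ j • t ∉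
        (ℓ : ℤ_[ℓ]) ^ n • (⊤ : Submodule ℤ_[ℓ] T) := by
    intro i j hi hij hmem
    have hunit : IsUnit (1 - (ℓ : ℤ_[ℓ]) ^ (j - i)) := by
      apply IsLocalRing.isUnit_one_sub_self_of_mem_nonunits
      rw [mem_nonunits_iff]
      intro hun
      exact hℓnu ((isUnit_pow_iff (Nat.sub_ne_zero_of_lt hij)).mp hun)
    have hfac : (ℓ : ℤ_[ℓ]) ^ i • t - (ℓ : ℤ_[ℓ]) ^ j • t =
        ((ℓ : ℤ_[ℓ]) ^ i * (1 - (ℓ : ℤ_[ℓ]) ^ (j - i))) • t := by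
      rw [mul_sub, mul_one, sub_smul, ← pow_add, Nat.add_sub_cancel' hij.le]
    rw [hfac] at hmem
    obtain ⟨w, hw⟩ := hunit
    apply hout i hi
    have hrw : (ℓ : ℤ_[ℓ]) ^ i • t =
        (↑w⁻¹ : ℤ_[ℓ]) • (((ℓ : ℤ_[ℓ]) ^ i * (1 - (ℓ : ℤ_[ℓ]) ^ (j - i))) • t) := by
      rw [smul_smul, ← hw, mul_comm ((ℓ : ℤ_[ℓ]) ^ i) (↑w : ℤ_[ℓ]), ← mul_assoc,
        Units.inv_mul, one_mul]
    rw [hrw]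
    exact Submodule.smul_mem _ _ hmem
  have hinj : Function.Injective (fun i : Fin (c+1) =>
      (⟨_, hmemS i⟩ :
        {x : T ⧸ ((ℓ : ℤ_[ℓ]) ^ n • (⊤ : Submodule ℤ_[ℓ] T)) |
          ∀ g : G, ∀ t : T, Submodule.Quotient.mk t = x →
            Submodule.Quotient.mk (ρ g t) = x})) := by
    intro i j hij
    simp only [Subtype.mk_eq_mk] at hij
    have hij' := (Submodule.Quotient.eq _).mp hij
    by_contra hne
    have hne' : (i:ℕ) ≠ (j:ℕ) := fun h => hne (Fin.ext h)
    rcases hne'.lt_or_gt with h | h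
    · exact hdist i j (Nat.lt_succ_iff.mp i.isLt) h hij'
    · refine hdist (j:ℕ) (i:ℕ) (Nat.lt_succ_iff.mp j.isLt) h ?_
      have := Submodule.neg_mem _ hij'
      rwa [neg_sub] at this
  haveI : Finite (T ⧸ ((ℓ : ℤ_[ℓ]) ^ n • (⊤ : Submodule ℤ_[ℓ] T))) := padic_quot_finite ℓ T n
  have hcard := Nat.card_le_card_of_injective _ hinj
  rw [Nat.card_eq_fintype_card, Fintype.card_fin] at hcard
  exact absurd (le_trans hcard (hbound n)) (by omega)

/-- Let `T` be a finitely generated `ℤ_ℓ`-module with a `ℤ_ℓ`-linear action `ρ` of a group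
`G`, and `V = ℚ_ℓ ⊗ T`.  If the `G`-invariants of `T/ℓⁿT` have order bounded by a
constant `c` independent of `n`, then `V^G = 0`. -/
theorem bounded_invariants_implies_no_rational_invariants
    (ℓ : ℕ) [Fact ℓ.Prime]
    (T : Type*) [AddCommGroup T] [Module ℤ_[ℓ] T] [Module.Finite ℤ_[ℓ] T]
    (G : Type*) [Group G] (ρ : Representation ℤ_[ℓ] G T)
    (c : ℕ)
    (hbound : ∀ n : ℕ,
      Nat.card {x : T ⧸ ((ℓ : ℤ_[ℓ]) ^ n • (⊤ : Submodule ℤ_[ℓ] T)) |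
        ∀ g : G, ∀ t : T, Submodule.Quotient.mk t = x →
          Submodule.Quotient.mk (ρ g t) = x} ≤ c) :
    ∀ v : TensorProduct ℤ_[ℓ] ℚ_[ℓ] T,
      (∀ g : G, LinearMap.baseChange ℚ_[ℓ] (ρ g) v = v) → v = 0 := by
  intro v hv
  set f : T →ₗ[ℤ_[ℓ]] TensorProduct ℤ_[ℓ] ℚ_[ℓ] T := TensorProduct.mk ℤ_[ℓ] ℚ_[ℓ] T 1 with hf
  haveI hloc : IsLocalizedModule (nonZeroDivisors ℤ_[ℓ]) f :=
    (isLocalizedModule_iff_isBaseChange (nonZeroDivisors ℤ_[ℓ]) ℚ_[ℓ] f).mpr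
      (TensorProduct.isBaseChange ℤ_[ℓ] T ℚ_[ℓ])
  obtain ⟨⟨t, s⟩, hts⟩ := IsLocalizedModule.surj (nonZeroDivisors ℤ_[ℓ]) f v
  -- hts : s • v = f t
  have htors : ∀ g : G, ρ g t - t ∈ Submodule.torsion ℤ_[ℓ] T := by
    intro g
    have h1 : f (ρ g t) = LinearMap.baseChange ℚ_[ℓ] (ρ g) (f t) := by
      simp [hf, TensorProduct.mk_apply, LinearMap.baseChange_tmul]
    have h2 : f (ρ g t) = f t := by
      rw [h1, ← hts, LinearMap.map_smul_of_tower, hv g, hts]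
    have h3 : f (ρ g t - t) = 0 := by rw [map_sub, h2, sub_self]
    obtain ⟨s', hs'⟩ := (IsLocalizedModule.eq_zero_iff (nonZeroDivisors ℤ_[ℓ]) f).mp h3
    exact ⟨s', hs'⟩
  -- annihilator of the torsion submodule
  haveI : Module.Finite ℤ_[ℓ] (Submodule.torsion ℤ_[ℓ] T) := by
    haveI : IsNoetherian ℤ_[ℓ] T := inferInstance
    exact Module.Finite.iff_fg.mpr (IsNoetherian.noetherian _)
  have hann := Submodule.annihilator_top_inter_nonZeroDivisors
    (R := ℤ_[ℓ]) (M := Submodule.torsion ℤ_[ℓ] T) (Submodule.torsion_isTorsion)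
  obtain ⟨r, hr1, hr2⟩ := hann
  have hrkill : ∀ x : T, x ∈ Submodule.torsion ℤ_[ℓ] T → r • x = 0 := by
    intro x hx
    have := Submodule.mem_annihilator.mp hr1 ⟨x, hx⟩ Submodule.mem_top
    exact congrArg Subtype.val this
  -- the element r • t is genuinely invariant
  have hinv : ∀ g : G, ρ g (r • t) = r • t := by
    intro g
    have := hrkill _ (htors g)
    rw [smul_sub, sub_eq_zero] at this
    rw [map_smul]
    exact this
  obtain ⟨m, hm⟩ := key_torsion ℓ T G ρ c hbound (r • t) hinv
  -- now (ℓ^m * r * s) • v = 0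
  have hz : ((ℓ : ℤ_[ℓ]) ^ m * r * (s : ℤ_[ℓ])) • v = 0 := by
    have h0 : ((ℓ : ℤ_[ℓ]) ^ m * r) • (s • v) = 0 := by
      rw [hts, ← map_smul, mul_smul, hm, map_zero]
    rw [mul_smul]
    exact h0
  have hne : ((ℓ : ℤ_[ℓ]) ^ m * r * (s : ℤ_[ℓ])) ≠ 0 := by
    have hℓ : (ℓ : ℤ_[ℓ]) ≠ 0 := Nat.cast_ne_zero.mpr (Fact.out : ℓ.Prime).ne_zero
    exact mul_ne_zero (mul_ne_zero (pow_ne_zero m hℓ) (nonZeroDivisors.ne_zero hr2))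
      (nonZeroDivisors.ne_zero s.prop)
  have hz' : (algebraMap ℤ_[ℓ] ℚ_[ℓ] ((ℓ : ℤ_[ℓ]) ^ m * r * (s : ℤ_[ℓ]))) • v = 0 := by
    rw [algebraMap_smul]
    exact hz
  rcases smul_eq_zero.mp hz' with h | h
  · exact absurd ((map_eq_zero_iff _ (IsFractionRing.injective ℤ_[ℓ] ℚ_[ℓ])).mp h) hne
  · exact h
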